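/- Let D be a derivation on a commutative algebra with Dρ = ρ², Dρ̄ = ρ̄², ρ and ρ̄ invertible. Suppose Dc = 0 (c a constant of integration) and DL₄° = 0. Then L₅ := (ρ̄/ρ)·c - (1/3)·ρ̄·M, where DM = 0, satisfies the equation 3·DL₅ + ρ·M·ρ̄ + 3(ρ - ρ̄)L₅ = 0. (ρ-integration of the second Weyl-Lanczos equation with D = Þ, M = ð̃'L₄°.) -/
import Mathlib


/-- ρ-integration of the second Weyl-Lanczos equation: with D a derivation,
Dρ = ρ², Dρ̄ = ρ̄², ρ invertible, c and M in ker D, the element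
L₅ = (ρ̄/ρ)c - (1/3)ρ̄M satisfies 3DL₅ + ρMρ̄ + 3(ρ-ρ̄)L₅ = 0. -/
theorem stmt5 {A : Type*} [CommRing A] [Algebra ℚ A] (D : Derivation ℚ A A)
    (ρ ρinv ρbar c M : A) (h1 : ρ * ρinv = 1)
    (hρ : D ρ = ρ ^ 2) (hρbar : D ρbar = ρbar ^ 2)
    (hc : D c = 0) (hM : D M = 0) :
    3 * D (ρbar * ρinv * c - (1/3 : ℚ) • (ρbar * M)) + ρ * M * ρbar
      + 3 * (ρ - ρbar) * (ρbar * ρinv * c - (1/3 : ℚ) • (ρbar * M)) = 0 := by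
  have h0 : D (ρ * ρinv) = 0 := by rw [h1]; exact Derivation.map_one_eq_zero D
  have hlb := D.leibniz ρ ρinv
  rw [h0, hρ, smul_eq_mul, smul_eq_mul] at hlb
  have h2 : D ρinv = -1 := by linear_combination ρinv * hlb.symm - (D ρinv + 1 + ρ * ρinv) * h1
  have hy : (3:A) * ((1/3:ℚ) • (ρbar * M)) = ρbar * M := by
    rw [Algebra.smul_def]
    have : ((algebraMap ℚ A) (1/3 : ℚ)) * 3 = 1 := by
      rw [show (3:A) = algebraMap ℚ A 3 by rw [map_ofNat], ← map_mul]
      norm_num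
    linear_combination ρbar * M * this
  have hDy : (3:A) * D ((1/3:ℚ) • (ρbar * M)) = M * ρbar ^ 2 := by
    rw [D.map_smul, D.leibniz, hM, hρbar, Algebra.smul_def]
    have : ((algebraMap ℚ A) (1/3 : ℚ)) * 3 = 1 := by
      rw [show (3:A) = algebraMap ℚ A 3 by rw [map_ofNat], ← map_mul]
      norm_num
    simp only [smul_eq_mul]
    linear_combination M * ρbar ^ 2 * this
  rw [map_sub, D.leibniz, D.leibniz, hc, hρbar, h2]
  simp only [smul_eq_mul]
  linear_combination 3 * c * ρbar * h1 - hDy + (ρbar - ρ) * hy
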